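/- Let M be a positive integer and let r, L be reals with 0 < r < L. Then inf{ M·a + M·b : a ≥ 0, b ≥ 0, r/max(1−a, 0) + r/max(1−b, 0) > L } = M · max(1 − 2r/L, 0) / (1 − r/L), where the convention r/0 = +∞ is used in the constraint. (Corollary, part (2): the closed-form DMDT of the VBL ARQ protocol for a (1, M, 1) MIMO multihop network under the long-term static channel assumption, equal to M·(1−2r/L)/(1−r/L) for 0 ≤ r ≤ L/2 and 0 otherwise.) -/

import Mathlib

theorem VBL_DMDT_1_M_1_closedForm
    (M : ℕ) (hM : 0 < M)
    (r L : ℝ) (hr : 0 < r) (hrL : r < L) :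
    sInf {x : ℝ | ∃ a b : ℝ, 0 ≤ a ∧ 0 ≤ b ∧
        ENNReal.ofReal r / ENNReal.ofReal (max (1 - a) 0)
          + ENNReal.ofReal r / ENNReal.ofReal (max (1 - b) 0) > ENNReal.ofReal L ∧
        x = (M : ℝ) * a + (M : ℝ) * b}
      = (M : ℝ) * max (1 - 2 * r / L) 0 / (1 - r / L) := by
  have hL : 0 < L := hr.trans hrL
  have hρ0 : 0 < r / L := div_pos hr hL
  have hρ1 : r / L < 1 := (div_lt_one hL).2 hrL
  have h1ρ : 0 < 1 - r / L := by linarith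
  have hsplit : 2 * r / L = r / L + r / L := by ring
  have hM' : (0:ℝ) < M := Nat.cast_pos.2 hM
  set c0 : ℝ := max (1 - 2 * r / L) 0 / (1 - r / L) with hc0def
  have hc00 : 0 ≤ c0 := div_nonneg (le_max_right _ _) h1ρ.le
  have hc01 : c0 < 1 := by
    rw [hc0def, div_lt_one h1ρ]
    rcases max_cases (1 - 2 * r / L) 0 with ⟨h, _⟩ | ⟨h, _⟩ <;> rw [h] <;> linarith
  have hconv : ∀ t : ℝ, t < 1 →
      ENNReal.ofReal r / ENNReal.ofReal (max (1 - t) 0) = ENNReal.ofReal (r / (1 - t)) := by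
    intro t ht
    rw [max_eq_left (by linarith), ENNReal.ofReal_div_of_pos (by linarith)]
  set S := {x : ℝ | ∃ a b : ℝ, 0 ≤ a ∧ 0 ≤ b ∧
        ENNReal.ofReal r / ENNReal.ofReal (max (1 - a) 0)
          + ENNReal.ofReal r / ENNReal.ofReal (max (1 - b) 0) > ENNReal.ofReal L ∧
        x = (M : ℝ) * a + (M : ℝ) * b} with hS
  have hne : S.Nonempty := by
    refine ⟨(M:ℝ) * 1 + (M:ℝ) * 1, 1, 1, zero_le_one, zero_le_one, ?_, rfl⟩
    simp [ENNReal.div_zero (by positivity : ENNReal.ofReal r ≠ 0)]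
  have hbdd : BddBelow S := by
    refine ⟨0, fun x hx => ?_⟩
    obtain ⟨a, b, ha, hb, -, hx⟩ := hx
    rw [hx]; positivity
  -- lower bound
  have hlow : ∀ x ∈ S, (M:ℝ) * c0 ≤ x := by
    rintro x ⟨a, b, ha, hb, hcon, rfl⟩
    have hgoal : c0 ≤ a + b := by
      by_cases ha1 : 1 ≤ a
      · linarith
      by_cases hb1 : 1 ≤ b
      · linarith
      push_neg at ha1 hb1
      have hua : 0 < 1 - a := by linarith
      have hub : 0 < 1 - b := by linarith
      rw [hconv a ha1, hconv b hb1,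
        ← ENNReal.ofReal_add (div_pos hr hua).le (div_pos hr hub).le] at hcon
      have hcon' : L < r / (1 - a) + r / (1 - b) :=
        (ENNReal.ofReal_lt_ofReal_iff
          (by have := div_pos hr hua; have := div_pos hr hub; linarith)).1 hcon
      rw [div_add_div _ _ (ne_of_gt hua) (ne_of_gt hub), lt_div_iff₀ (mul_pos hua hub)] at hcon'
      have key : L - 2 * r ≤ (a + b) * (L - r) := by nlinarith [mul_nonneg ha hb]
      rw [hc0def, div_le_iff₀ h1ρ]
      rcases max_cases (1 - 2 * r / L) 0 with ⟨h, _⟩ | ⟨h, _⟩ <;> rw [h]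
      · have h1 : 2 * r / L * L = 2 * r := div_mul_cancel₀ _ (ne_of_gt hL)
        have h2 : r / L * L = r := div_mul_cancel₀ _ (ne_of_gt hL)
        nlinarith [key]
      · positivity
    nlinarith [hgoal]
  -- upper bound: witnesses
  have hupper : sInf S ≤ (M:ℝ) * c0 := by
    refine le_of_forall_pos_le_add fun ε hε => ?_
    set δ : ℝ := min (ε / M) ((1 - c0) / 2) with hδdef
    have hδ0 : 0 < δ := lt_min (by positivity) (by linarith)
    set b : ℝ := c0 + δ with hbdef
    have hb1 : b < 1 := by
      have : δ ≤ (1 - c0) / 2 := min_le_right _ _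
      rw [hbdef]; linarith
    have hb0 : 0 ≤ b := by rw [hbdef]; linarith
    have h1c0 : 0 < 1 - c0 := by linarith
    have hbase : L - r ≤ r / (1 - c0) := by
      rw [le_div_iff₀ h1c0]
      rcases max_cases (1 - 2 * r / L) 0 with ⟨h, hge⟩ | ⟨h, hle⟩
      · have hc0eq : c0 * (1 - r / L) = 1 - 2 * r / L := by
          rw [hc0def, h, div_mul_cancel₀ _ (ne_of_gt h1ρ)]
        have ha1 : (1 - r / L) * L = L - r := by field_simp
        have ha2 : (1 - 2 * r / L) * L = L - 2 * r := by field_simp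
        have hc0L : c0 * (L - r) = L - 2 * r := by
          calc c0 * (L - r) = c0 * ((1 - r / L) * L) := by rw [ha1]
            _ = (c0 * (1 - r / L)) * L := by ring
            _ = (1 - 2 * r / L) * L := by rw [hc0eq]
            _ = L - 2 * r := ha2
        nlinarith [hc0L]
      · have hc0z : c0 = 0 := by rw [hc0def, h, zero_div]
        rw [hc0z]
        have hL2r : L ≤ 2 * r := by
          by_contra hc
          push_neg at hc
          have : 0 < 1 - 2 * r / L := by
            rw [sub_pos, div_lt_one hL]; linarith
          linarith
        nlinarith
    have h1b : 0 < 1 - b := by linarith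
    have hcons : L < r + r / (1 - b) := by
      have hstep : r / (1 - c0) < r / (1 - b) := by
        apply div_lt_div_of_pos_left hr h1b (by rw [hbdef]; linarith)
      linarith [hbase]
    have hmem : (M:ℝ) * 0 + (M:ℝ) * b ∈ S := by
      refine ⟨0, b, le_refl 0, hb0, ?_, rfl⟩
      rw [hconv 0 (by norm_num), hconv b hb1,
        ← ENNReal.ofReal_add (by norm_num; exact hr.le) (div_pos hr h1b).le]
      apply (ENNReal.ofReal_lt_ofReal_iff
        (by have := div_pos hr h1b; norm_num; linarith)).2
      norm_num
      linarith [hcons]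
    have hle := csInf_le hbdd hmem
    have hδε : (M:ℝ) * δ ≤ ε := by
      have h1 : δ ≤ ε / M := min_le_left _ _
      calc (M:ℝ) * δ ≤ (M:ℝ) * (ε / M) := by nlinarith
        _ = ε := by field_simp
    calc sInf S ≤ (M:ℝ) * 0 + (M:ℝ) * b := hle
      _ = (M:ℝ) * c0 + (M:ℝ) * δ := by rw [hbdef, mul_zero, zero_add, mul_add]
      _ ≤ (M:ℝ) * c0 + ε := add_le_add_right hδε _
  have hfin : sInf S = (M:ℝ) * c0 := le_antisymm hupper (le_csInf hne hlow)
  exact hfin.trans (by rw [hc0def]; exact (mul_div_assoc _ _ _).symm)
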